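/- Let m be a real number, s > 0 and ε > 0. If Z is distributed according to the Gaussian measure N(m, s²) on ℝ, then ∫ sign(z − ε·sign(z))·(z − m) dN(m,s²)(z) = s·√(2/π)·(exp(−(ε+m)²/(2s²)) + exp(−(ε−m)²/(2s²)) − exp(−m²/(2s²))). -/

import Mathlib

open MeasureTheory ProbabilityTheory Set Filter

private lemma measurable_realSign : Measurable Real.sign := by
  have h : Real.sign = fun r : ℝ => if r < 0 then (-1 : ℝ) else if 0 < r then 1 else 0 := by
    funext r; rfl
  rw [h]
  exact Measurable.ite (measurableSet_lt measurable_id measurable_const) measurable_const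
    (Measurable.ite (measurableSet_lt measurable_const measurable_id) measurable_const
      measurable_const)

private lemma abs_realSign_le_one (x : ℝ) : |Real.sign x| ≤ 1 := by
  rcases lt_trichotomy x 0 with h | h | h
  · simp [Real.sign_of_neg h]
  · simp [h, Real.sign, lt_irrefl]
  · simp [Real.sign_of_pos h]

private lemma hasDerivF {s : ℝ} (hs : 0 < s) (c m z : ℝ) :
    HasDerivAt (fun z => -s ^ 2 * (c * Real.exp (-(z - m) ^ 2 / (2 * s ^ 2))))
      ((z - m) * (c * Real.exp (-(z - m) ^ 2 / (2 * s ^ 2)))) z := by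
  have h1 : HasDerivAt (fun z : ℝ => z - m) 1 z := (hasDerivAt_id z).sub_const m
  have h2 : HasDerivAt (fun z : ℝ => (z - m) ^ 2) (2 * (z - m)) z := by
    simpa using h1.fun_pow 2
  have h3 : HasDerivAt (fun z : ℝ => -(z - m) ^ 2 / (2 * s ^ 2))
      (-(2 * (z - m)) / (2 * s ^ 2)) z := h2.neg.div_const _
  have h4 := (h3.exp.const_mul c).const_mul (-s ^ 2)
  convert h4 using 1
  · rfl
  · rfl
  have hs' : s ≠ 0 := hs.ne'
  field_simp

private lemma hasDerivG {s : ℝ} (hs : 0 < s) (c m x : ℝ) :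
    HasDerivAt (fun x => s ^ 2 * (c * Real.exp (-(-x - m) ^ 2 / (2 * s ^ 2))))
      ((-x - m) * (c * Real.exp (-(-x - m) ^ 2 / (2 * s ^ 2)))) x := by
  have h1 : HasDerivAt (fun x : ℝ => -x - m) (-1) x := (hasDerivAt_neg x).sub_const m
  have h2 : HasDerivAt (fun x : ℝ => (-x - m) ^ 2) (2 * (-x - m) ^ 1 * (-1)) x := h1.pow 2
  have h3 : HasDerivAt (fun x : ℝ => -(-x - m) ^ 2 / (2 * s ^ 2))
      (-(2 * (-x - m) ^ 1 * (-1)) / (2 * s ^ 2)) x := h2.neg.div_const _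
  have h4 := (h3.exp.const_mul c).const_mul (s ^ 2)
  convert h4 using 1
  · rfl
  · rfl
  have hs' : s ≠ 0 := hs.ne'
  field_simp

private lemma tendsto_aux {s : ℝ} (hs : 0 < s) (C a : ℝ) :
    Tendsto (fun z : ℝ => C * Real.exp (-(z - a) ^ 2 / (2 * s ^ 2))) atTop (nhds 0) := by
  have h1 : Tendsto (fun z : ℝ => z - a) atTop atTop :=
    tendsto_atTop_add_const_right _ (-a) tendsto_id
  have h2 : Tendsto (fun z : ℝ => (z - a) ^ 2) atTop atTop :=
    (tendsto_pow_atTop two_ne_zero).comp h1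
  have h3 : Tendsto (fun z : ℝ => (z - a) ^ 2 / (2 * s ^ 2)) atTop atTop :=
    h2.atTop_div_const (by positivity)
  have h4 : Tendsto (fun z : ℝ => -(z - a) ^ 2 / (2 * s ^ 2)) atTop atBot := by
    have := tendsto_neg_atTop_atBot.comp h3
    refine this.congr fun z => ?_
    simp [neg_div]
  have h5 := Real.tendsto_exp_atBot.comp h4
  simpa using h5.const_mul C

private lemma integrableF {s : ℝ} (hs : 0 < s) (c m : ℝ) :
    Integrable (fun z => (z - m) * (c * Real.exp (-(z - m) ^ 2 / (2 * s ^ 2)))) := by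
  have hb : (0 : ℝ) < (2 * s ^ 2)⁻¹ := by positivity
  have h := ((integrable_mul_exp_neg_mul_sq hb).comp_sub_right m).const_mul c
  refine h.congr (Filter.Eventually.of_forall fun z => ?_)
  show c * ((z - m) * Real.exp (-(2 * s ^ 2)⁻¹ * (z - m) ^ 2))
      = (z - m) * (c * Real.exp (-(z - m) ^ 2 / (2 * s ^ 2)))
  rw [show -(2 * s ^ 2)⁻¹ * (z - m) ^ 2 = -(z - m) ^ 2 / (2 * s ^ 2) by ring]
  ring

private lemma main_calc (m s ε : ℝ) (hs : 0 < s) (hε : 0 < ε) :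
    ∫ z, Real.sign (z - ε * Real.sign z) *
        ((z - m) * ((Real.sqrt (2 * Real.pi * s ^ 2))⁻¹ * Real.exp (-(z - m) ^ 2 / (2 * s ^ 2))))
      = 2 * s ^ 2 * (Real.sqrt (2 * Real.pi * s ^ 2))⁻¹ *
        (Real.exp (-(ε + m) ^ 2 / (2 * s ^ 2)) + Real.exp (-(ε - m) ^ 2 / (2 * s ^ 2))
          - Real.exp (-m ^ 2 / (2 * s ^ 2))) := by
  set c : ℝ := (Real.sqrt (2 * Real.pi * s ^ 2))⁻¹ with hc
  set f : ℝ → ℝ := fun z => (z - m) * (c * Real.exp (-(z - m) ^ 2 / (2 * s ^ 2))) with hf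
  set h : ℝ → ℝ := fun z => Real.sign (z - ε * Real.sign z) * f z with hh
  have hInt : Integrable f := integrableF hs c m
  have hF : ∀ z : ℝ, HasDerivAt (fun z => -s ^ 2 * (c * Real.exp (-(z - m) ^ 2 / (2 * s ^ 2))))
      (f z) z := fun z => hasDerivF hs c m z
  -- integrability of h
  have hmeas : Measurable h := by
    apply Measurable.mul
    · exact measurable_realSign.comp
        (measurable_id.sub (measurable_const.mul measurable_realSign))
    · apply Measurable.mul (measurable_id.sub measurable_const)
      exact (measurable_const.mul ((measurable_id.sub measurable_const).pow measurable_const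
        |>.neg.div measurable_const).exp)
  have hIntH : Integrable h := by
    refine Integrable.mono' hInt.abs hmeas.aestronglyMeasurable
      (Filter.Eventually.of_forall fun z => ?_)
    rw [hh]
    simp only [Real.norm_eq_abs, abs_mul]
    calc |Real.sign (z - ε * Real.sign z)| * |f z| ≤ 1 * |f z| :=
          mul_le_mul_of_nonneg_right (abs_realSign_le_one _) (abs_nonneg _)
      _ = |f z| := one_mul _
  -- improper integral on (ε, ∞)
  have htendF : Tendsto (fun z => -s ^ 2 * (c * Real.exp (-(z - m) ^ 2 / (2 * s ^ 2))))
      atTop (nhds 0) := by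
    refine (tendsto_aux hs (-s ^ 2 * c) m).congr fun z => ?_
    ring
  have P1 : ∫ z in Ioi ε, f z = s ^ 2 * (c * Real.exp (-(ε - m) ^ 2 / (2 * s ^ 2))) := by
    rw [integral_Ioi_of_hasDerivAt_of_tendsto' (fun x _ => hF x) hInt.integrableOn htendF]
    ring
  -- improper integral on (-∞, -ε]
  have P4 : ∫ z in Iic (-ε), f z = -(s ^ 2 * (c * Real.exp (-(-ε - m) ^ 2 / (2 * s ^ 2)))) := by
    rw [← integral_comp_neg_Ioi]
    have hG : ∀ x : ℝ, HasDerivAt (fun x => s ^ 2 * (c * Real.exp (-(-x - m) ^ 2 / (2 * s ^ 2))))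
        (f (-x)) x := fun x => hasDerivG hs c m x
    have hIntG : IntegrableOn (fun x => f (-x)) (Ioi ε) := (hInt.comp_neg).integrableOn
    have htendG : Tendsto (fun x => s ^ 2 * (c * Real.exp (-(-x - m) ^ 2 / (2 * s ^ 2))))
        atTop (nhds 0) := by
      refine (tendsto_aux hs (s ^ 2 * c) (-m)).congr fun x => ?_
      rw [show (x - -m) ^ 2 = (-x - m) ^ 2 by ring]
      ring
    rw [integral_Ioi_of_hasDerivAt_of_tendsto' (fun x _ => hG x) hIntG htendG]
    ring
  -- interval FTC
  have FTCoo : ∀ a b : ℝ, a ≤ b → ∫ z in Ioo a b, f z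
      = s ^ 2 * (c * Real.exp (-(a - m) ^ 2 / (2 * s ^ 2)))
        - s ^ 2 * (c * Real.exp (-(b - m) ^ 2 / (2 * s ^ 2))) := by
    intro a b hab
    rw [← integral_Ioc_eq_integral_Ioo, ← intervalIntegral.integral_of_le hab,
      intervalIntegral.integral_eq_sub_of_hasDerivAt (fun x _ => hF x)
        hInt.intervalIntegrable]
    ring
  -- splitting
  have split1 : ∫ z, h z = (∫ z in Iic (-ε), h z) + ∫ z in Ioi (-ε), h z :=
    (intervalIntegral.integral_Iic_add_Ioi hIntH.integrableOn hIntH.integrableOn).symm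
  have split2 : ∫ z in Ioi (-ε), h z = (∫ z in Ioc (-ε) 0, h z) + ∫ z in Ioi 0, h z := by
    rw [← setIntegral_union (Ioc_disjoint_Ioi le_rfl) measurableSet_Ioi
      hIntH.integrableOn hIntH.integrableOn, Ioc_union_Ioi_eq_Ioi (by linarith)]
  have split3 : ∫ z in Ioi 0, h z = (∫ z in Ioc 0 ε, h z) + ∫ z in Ioi ε, h z := by
    rw [← setIntegral_union (Ioc_disjoint_Ioi le_rfl) measurableSet_Ioi
      hIntH.integrableOn hIntH.integrableOn, Ioc_union_Ioi_eq_Ioi (by linarith)]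
  -- piece evaluations
  have E1 : ∫ z in Iic (-ε), h z = s ^ 2 * (c * Real.exp (-(-ε - m) ^ 2 / (2 * s ^ 2))) := by
    rw [integral_Iic_eq_integral_Iio,
      setIntegral_congr_fun measurableSet_Iio (g := fun z => -f z) ?_,
      integral_neg, ← integral_Iic_eq_integral_Iio, P4, neg_neg]
    intro z hz
    have hz0 : z < 0 := lt_trans hz (by linarith)
    rw [hh]
    simp only
    rw [Real.sign_of_neg hz0, Real.sign_of_neg (show z - ε * (-1) < 0 by
      simp only [mem_Iio] at hz; linarith)]
    ring
  have E2 : ∫ z in Ioc (-ε) 0, h z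
      = s ^ 2 * (c * Real.exp (-(-ε - m) ^ 2 / (2 * s ^ 2)))
        - s ^ 2 * (c * Real.exp (-(0 - m) ^ 2 / (2 * s ^ 2))) := by
    rw [integral_Ioc_eq_integral_Ioo,
      setIntegral_congr_fun measurableSet_Ioo (g := f) ?_, FTCoo (-ε) 0 (by linarith)]
    intro z hz
    rw [hh]
    simp only
    rw [Real.sign_of_neg hz.2, Real.sign_of_pos (show 0 < z - ε * (-1) by
      have := hz.1; linarith)]
    ring
  have E3 : ∫ z in Ioc 0 ε, h z
      = s ^ 2 * (c * Real.exp (-(ε - m) ^ 2 / (2 * s ^ 2)))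
        - s ^ 2 * (c * Real.exp (-(0 - m) ^ 2 / (2 * s ^ 2))) := by
    rw [integral_Ioc_eq_integral_Ioo,
      setIntegral_congr_fun measurableSet_Ioo (g := fun z => -f z) ?_,
      integral_neg, FTCoo 0 ε (by linarith)]
    · ring
    intro z hz
    rw [hh]
    simp only
    rw [Real.sign_of_pos hz.1, Real.sign_of_neg (show z - ε * 1 < 0 by
      have := hz.2; linarith)]
    ring
  have E4 : ∫ z in Ioi ε, h z = s ^ 2 * (c * Real.exp (-(ε - m) ^ 2 / (2 * s ^ 2))) := by
    rw [setIntegral_congr_fun measurableSet_Ioi (g := f) ?_, P1]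
    intro z hz
    have hz0 : (0 : ℝ) < z := lt_trans hε hz
    rw [hh]
    simp only
    rw [Real.sign_of_pos hz0, Real.sign_of_pos (show 0 < z - ε * 1 by
      simp only [mem_Ioi] at hz; linarith)]
    ring
  calc ∫ z, h z = (∫ z in Iic (-ε), h z) + ((∫ z in Ioc (-ε) 0, h z)
          + ((∫ z in Ioc 0 ε, h z) + ∫ z in Ioi ε, h z)) := by
        rw [split1, split2, split3]
    _ = 2 * s ^ 2 * c *
        (Real.exp (-(ε + m) ^ 2 / (2 * s ^ 2)) + Real.exp (-(ε - m) ^ 2 / (2 * s ^ 2))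
          - Real.exp (-m ^ 2 / (2 * s ^ 2))) := by
        rw [E1, E2, E3, E4, show (-ε - m) ^ 2 = (ε + m) ^ 2 by ring,
          show (0 - m : ℝ) ^ 2 = m ^ 2 by ring]
        ring

theorem gaussian_shrunk_sign_integral (m s ε : ℝ) (hs : 0 < s) (hε : 0 < ε) :
    ∫ z, Real.sign (z - ε * Real.sign z) * (z - m) ∂(gaussianReal m ⟨s ^ 2, sq_nonneg s⟩)
      = s * Real.sqrt (2 / Real.pi) *
        (Real.exp (-(ε + m) ^ 2 / (2 * s ^ 2)) + Real.exp (-(ε - m) ^ 2 / (2 * s ^ 2))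
          - Real.exp (-(m ^ 2) / (2 * s ^ 2))) := by
  have hv : (⟨s ^ 2, sq_nonneg s⟩ : NNReal) ≠ 0 := by
    intro hcon
    have h0 : s ^ 2 = 0 := congrArg NNReal.toReal hcon
    exact (by positivity : (0 : ℝ) < s ^ 2).ne' h0
  rw [gaussianReal_of_var_ne_zero m hv]
  have hpdf : gaussianPDF m ⟨s ^ 2, sq_nonneg s⟩
      = fun x => ((Real.toNNReal (gaussianPDFReal m ⟨s ^ 2, sq_nonneg s⟩ x) : NNReal) : ENNReal) :=
    rfl
  rw [hpdf, integral_withDensity_eq_integral_smul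
    ((measurable_gaussianPDFReal m ⟨s ^ 2, sq_nonneg s⟩).real_toNNReal) _]
  have hstep : ∫ z, (Real.toNNReal (gaussianPDFReal m ⟨s ^ 2, sq_nonneg s⟩ z))
        • (Real.sign (z - ε * Real.sign z) * (z - m))
      = ∫ z, Real.sign (z - ε * Real.sign z) *
        ((z - m) * ((Real.sqrt (2 * Real.pi * s ^ 2))⁻¹
          * Real.exp (-(z - m) ^ 2 / (2 * s ^ 2)))) := by
    congr 1
    funext z
    rw [NNReal.smul_def, smul_eq_mul]
    erw [Real.coe_toNNReal _ (gaussianPDFReal_nonneg _ _ _)]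
    have : gaussianPDFReal m ⟨s ^ 2, sq_nonneg s⟩ z
        = (Real.sqrt (2 * Real.pi * s ^ 2))⁻¹ * Real.exp (-(z - m) ^ 2 / (2 * s ^ 2)) := rfl
    rw [this]
    ring
  rw [hstep, main_calc m s ε hs hε]
  have hsqrt : Real.sqrt (2 * Real.pi * s ^ 2) = s * Real.sqrt (2 * Real.pi) := by
    rw [mul_comm, Real.sqrt_mul (sq_nonneg s), Real.sqrt_sq hs.le, mul_comm]
  have h2 : Real.sqrt (2 / Real.pi) * Real.sqrt (2 * Real.pi) = 2 := by
    rw [← Real.sqrt_mul (by positivity),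
      show 2 / Real.pi * (2 * Real.pi) = 4 by field_simp; ring,
      show (4 : ℝ) = 2 ^ 2 by norm_num, Real.sqrt_sq (by norm_num)]
  have hconst : 2 * s ^ 2 * (Real.sqrt (2 * Real.pi * s ^ 2))⁻¹
      = s * Real.sqrt (2 / Real.pi) := by
    have hne : s * Real.sqrt (2 * Real.pi) ≠ 0 := by positivity
    have key : s * Real.sqrt (2 / Real.pi) * (s * Real.sqrt (2 * Real.pi)) = 2 * s ^ 2 := by
      calc s * Real.sqrt (2 / Real.pi) * (s * Real.sqrt (2 * Real.pi))
          = s * s * (Real.sqrt (2 / Real.pi) * Real.sqrt (2 * Real.pi)) := by ring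
        _ = 2 * s ^ 2 := by rw [h2]; ring
    rw [hsqrt, ← key, mul_inv_cancel_right₀ hne]
  rw [hconst]
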